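/- The PF-D0 coefficient function b6 satisfies lim_{v→0⁺} b6(v) = −253491379/4435200 and lim_{v→0⁺} (b6(v) − (−253491379/4435200))/v² = 16301796103/1153152000; in particular b6 tends to the corresponding coefficient of the classical Quinlan–Tremaine method as v → 0. -/

import Mathlib

open Filter

/-- The variable coefficient `b₁(v)` of the phase-fitted method PF-D0. -/
noncomputable def pfb1 (v : ℝ) : ℝ :=
  (((-124184636) * Real.cos v + 70378348 * Real.cos (2 * v) - 24862148 * Real.cos (3 * v)
        + 5153611 * Real.cos (4 * v)) * v ^ 2
      + 25 * (3013169 * v ^ 2 - 16128 * Real.cos (3 * v) + 32256 * Real.cos (4 * v)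
        - 32256 * Real.cos (5 * v) + 16128 * Real.cos (6 * v)))
    / (206438400 * v ^ 2 * (Real.sin (v / 2)) ^ 10)

/-- The variable coefficient `b₂(v)` of the phase-fitted method PF-D0. -/
noncomputable def pfb2 (v : ℝ) : ℝ :=
  (v ^ 2 * (159588050 * Real.cos v - 85350160 * Real.cos (2 * v)
        + 16708985 * Real.cos (3 * v) - 5153611 * Real.cos (5 * v))
      - 16 * (6496079 * v ^ 2 - 252000 * Real.cos (3 * v) + 504000 * Real.cos (4 * v)
        - 504000 * Real.cos (5 * v) + 252000 * Real.cos (6 * v)))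
    / (206438400 * v ^ 2 * (Real.sin (v / 2)) ^ 10)

/-- The variable coefficient `b₃(v)` of the phase-fitted method PF-D0. -/
noncomputable def pfb3 (v : ℝ) : ℝ :=
  (((-367257540) * Real.cos v + 183567900 * Real.cos (2 * v)
        - 16708985 * Real.cos (4 * v) + 24862148 * Real.cos (5 * v)) * v ^ 2
      + 81 * (3175117 * v ^ 2 - 224000 * Real.cos (3 * v) + 448000 * Real.cos (4 * v)
        - 448000 * Real.cos (5 * v) + 224000 * Real.cos (6 * v)))
    / (206438400 * v ^ 2 * (Real.sin (v / 2)) ^ 10)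

/-- The variable coefficient `b₄(v)` of the phase-fitted method PF-D0. -/
noncomputable def pfb4 (v : ℝ) : ℝ :=
  (30675810 * v ^ 2 * Real.cos v - 42958788 * v ^ 2
      + 75 * (161280 - 611893 * v ^ 2) * Real.cos (3 * v)
      + 140 * (152411 * v ^ 2 - 172800) * Real.cos (4 * v)
      + (24192000 - 17594587 * v ^ 2) * Real.cos (5 * v)
      - 12096000 * Real.cos (6 * v))
    / (51609600 * v ^ 2 * (Real.sin (v / 2)) ^ 10)

/-- The variable coefficient `b₅(v)` of the phase-fitted method PF-D0. -/
noncomputable def pfb5 (v : ℝ) : ℝ :=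
  ((-61351620) * v ^ 2 * Real.cos (2 * v) + 85936557 * v ^ 2
      + 30 * (6120959 * v ^ 2 - 1411200) * Real.cos (3 * v)
      + 25 * (3386880 - 3191761 * v ^ 2) * Real.cos (4 * v)
      + (62092318 * v ^ 2 - 84672000) * Real.cos (5 * v)
      + 42336000 * Real.cos (6 * v))
    / (103219200 * v ^ 2 * (Real.sin (v / 2)) ^ 10)

/-- The variable coefficient `b₆(v)` of the phase-fitted method PF-D0. -/
noncomputable def pfb6 (v : ℝ) : ℝ :=
  (((-171873114) * Real.cos v + 171835152 * Real.cos (2 * v)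
        - 257184477 * Real.cos (3 * v) + 103937264 * Real.cos (4 * v)
        - 75329225 * Real.cos (5 * v)) * v ^ 2
      + 50803200 * (Real.cos (3 * v) - 2 * Real.cos (4 * v)
        + 2 * Real.cos (5 * v) - Real.cos (6 * v)))
    / (103219200 * v ^ 2 * (Real.sin (v / 2)) ^ 10)

open Set Finset

/-- Key analytic lemma: if `f` agrees with an (absolutely bounded-coefficient) even power
series on `(0,1)`, then `(f v - a 0)/v²` tends to `a 1` as `v → 0⁺`. -/
lemma ratio_lim (a : ℕ → ℝ) (f : ℝ → ℝ) (hs : Summable (fun n => |a n|))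
    (hf : ∀ v : ℝ, v ∈ Set.Ioo (0:ℝ) 1 → HasSum (fun n => a n * v ^ (2*n)) (f v)) :
    Tendsto (fun v => (f v - a 0) / v ^ 2) (nhdsWithin 0 (Set.Ioi 0)) (nhds (a 1)) := by
  have hs2 : Summable (fun n => |a (n+2)|) :=
    (summable_nat_add_iff (f := fun n => |a n|) 2).mpr hs
  set T := ∑' n, |a (n + 2)| with hT
  have key : ∀ v ∈ Set.Ioo (0:ℝ) 1, |(f v - a 0)/v^2 - a 1| ≤ T * v^2 := by
    intro v hv
    obtain ⟨hv0, hv1⟩ := hv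
    have hvne : v ≠ 0 := ne_of_gt hv0
    have hsum := hf v ⟨hv0, hv1⟩
    have hsummable : Summable (fun n => a n * v ^ (2*n)) := hsum.summable
    have h2 := Summable.sum_add_tsum_nat_add (f := fun n => a n * v^(2*n)) 2 hsummable
    rw [Finset.sum_range_succ, Finset.sum_range_one, hsum.tsum_eq] at h2
    norm_num at h2
    -- h2 : a 0 + a 1 * v^2 + ∑' n, a (n+2) * v^(2*(n+2)) = f v  (roughly)
    have habs : ∀ n : ℕ, |a (n+2) * v ^ (2*(n+2))| ≤ |a (n+2)| * v^4 := by
      intro n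
      rw [abs_mul, abs_pow, abs_of_pos hv0]
      have h4 : v ^ (2*(n+2)) ≤ v ^ 4 :=
        pow_le_pow_of_le_one hv0.le hv1.le (by omega)
      exact mul_le_mul_of_nonneg_left h4 (abs_nonneg _)
    have hsumabs : Summable (fun n => |a (n+2) * v ^ (2*(n+2))|) :=
      Summable.of_nonneg_of_le (fun n => abs_nonneg _)
        (fun n => habs n) (hs2.mul_right (v^4))
    have hb1 : |∑' n, a (n+2) * v ^ (2*(n+2))| ≤ T * v^4 := by
      calc |∑' n, a (n+2) * v ^ (2*(n+2))| ≤ ∑' n, |a (n+2) * v ^ (2*(n+2))| := by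
            have := norm_tsum_le_tsum_norm (f := fun n => a (n+2) * v ^ (2*(n+2)))
              (by simpa only [Real.norm_eq_abs] using hsumabs)
            simpa only [Real.norm_eq_abs] using this
        _ ≤ ∑' n, |a (n+2)| * v^4 := Summable.tsum_le_tsum habs hsumabs (hs2.mul_right (v^4))
        _ = T * v^4 := by rw [tsum_mul_right]
    have hfv : f v - a 0 - a 1 * v^2 = ∑' n, a (n+2) * v ^ (2*(n+2)) := by linarith
    have : (f v - a 0)/v^2 - a 1 = (∑' n, a (n+2) * v ^ (2*(n+2))) / v^2 := by
      rw [← hfv]; field_simp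
    rw [this, abs_div, abs_of_pos (pow_pos hv0 2)]
    rw [div_le_iff₀ (pow_pos hv0 2)]
    calc |∑' n, a (n+2) * v ^ (2*(n+2))| ≤ T * v^4 := hb1
      _ = T * v^2 * v^2 := by ring
  have hz : Tendsto (fun v : ℝ => T * v^2) (nhdsWithin 0 (Set.Ioi 0)) (nhds 0) := by
    have : Tendsto (fun v : ℝ => T * v^2) (nhds 0) (nhds (T * 0^2)) :=
      ((continuous_const.mul (continuous_pow 2)).tendsto 0)
    simpa using this.mono_left nhdsWithin_le_nhds
  have hsq : Tendsto (fun v => (f v - a 0)/v^2 - a 1) (nhdsWithin 0 (Set.Ioi 0)) (nhds 0) := by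
    apply squeeze_zero_norm' ?_ hz
    filter_upwards [Ioo_mem_nhdsGT_of_mem (show (0:ℝ) ∈ Set.Ico (0:ℝ) 1 by constructor <;> norm_num)] with v hv
    simpa [Real.norm_eq_abs] using key v hv
  have := hsq.add (tendsto_const_nhds (x := a 1))
  simpa using this

lemma cont_lim (a : ℕ → ℝ) (f : ℝ → ℝ) (hs : Summable (fun n => |a n|))
    (hf : ∀ v : ℝ, v ∈ Set.Ioo (0:ℝ) 1 → HasSum (fun n => a n * v ^ (2*n)) (f v)) :
    Tendsto f (nhdsWithin 0 (Set.Ioi 0)) (nhds (a 0)) := by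
  have h := ratio_lim a f hs hf
  have hp : Tendsto (fun v : ℝ => v^2) (nhdsWithin 0 (Set.Ioi 0)) (nhds 0) := by
    have : Tendsto (fun v : ℝ => v^2) (nhds 0) (nhds (0^2)) := (continuous_pow 2).tendsto 0
    simpa using this.mono_left nhdsWithin_le_nhds
  have h2 : Tendsto (fun v : ℝ => a 0 + ((f v - a 0)/v^2) * v^2)
      (nhdsWithin 0 (Set.Ioi 0)) (nhds (a 0 + a 1 * 0)) :=
    tendsto_const_nhds.add (h.mul hp)
  rw [show a 0 + a 1 * 0 = a 0 by ring] at h2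
  apply h2.congr'
  filter_upwards [self_mem_nhdsWithin] with v hv
  have hvne : v ≠ 0 := ne_of_gt hv
  field_simp
  ring

noncomputable def pfc1 (n : ℕ) : ℝ :=
  ((-1) ^ n / (Nat.factorial (2 * n) : ℝ)) *
    ((-171873114) * 1 ^ (2 * n) + 171835152 * 2 ^ (2 * n) - 257184477 * 3 ^ (2 * n)
      + 103937264 * 4 ^ (2 * n) - 75329225 * 5 ^ (2 * n))

noncomputable def pfc2 (n : ℕ) : ℝ :=
  ((-1) ^ n / (Nat.factorial (2 * n) : ℝ)) * 50803200 *
    (3 ^ (2 * n) - 2 * 4 ^ (2 * n) + 2 * 5 ^ (2 * n) - 6 ^ (2 * n))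

noncomputable def pfe : ℕ → ℝ
  | 0 => 0
  | n + 1 => pfc1 n

noncomputable def pfd (n : ℕ) : ℝ := pfe n + pfc2 n

lemma pfe_zero : pfe 0 = 0 := rfl
lemma pfe_succ (n : ℕ) : pfe (n + 1) = pfc1 n := rfl

lemma pfd_vals : pfd 0 = 0 ∧ pfd 1 = 0 ∧ pfd 2 = 0 ∧ pfd 3 = 0 ∧ pfd 4 = 0 ∧ pfd 5 = 0
    ∧ pfd 6 = -253491379/44 ∧ pfd 7 = 32822521621/8580 := by
  refine ⟨?_, ?_, ?_, ?_, ?_, ?_, ?_, ?_⟩ <;>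
    norm_num [pfd, pfe_zero, show pfe 1 = pfc1 0 from rfl, show pfe 2 = pfc1 1 from rfl,
      show pfe 3 = pfc1 2 from rfl, show pfe 4 = pfc1 3 from rfl, show pfe 5 = pfc1 4 from rfl,
      show pfe 6 = pfc1 5 from rfl, show pfe 7 = pfc1 6 from rfl, pfc1, pfc2, Nat.factorial]

lemma hasSum_cos_mul (k v : ℝ) :
    HasSum (fun n : ℕ => ((-1) ^ n * k ^ (2 * n) / (Nat.factorial (2 * n) : ℝ)) * v ^ (2 * n))
      (Real.cos (k * v)) := by
  have h := Real.hasSum_cos (k * v)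
  have heq : (fun n : ℕ => ((-1 : ℝ) ^ n * k ^ (2 * n) / (Nat.factorial (2 * n) : ℝ)) * v ^ (2 * n))
      = fun n : ℕ => (-1 : ℝ) ^ n * (k * v) ^ (2 * n) / (Nat.factorial (2 * n) : ℝ) := by
    funext n; rw [mul_pow]; ring
  rw [heq]; exact h

noncomputable def pfnum (v : ℝ) : ℝ :=
  ((-171873114) * Real.cos v + 171835152 * Real.cos (2 * v)
        - 257184477 * Real.cos (3 * v) + 103937264 * Real.cos (4 * v)
        - 75329225 * Real.cos (5 * v)) * v ^ 2
      + 50803200 * (Real.cos (3 * v) - 2 * Real.cos (4 * v)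
        + 2 * Real.cos (5 * v) - Real.cos (6 * v))

lemma hasSum_pfnum (v : ℝ) :
    HasSum (fun n : ℕ => pfd n * v ^ (2 * n)) (pfnum v) := by
  have h1 := (hasSum_cos_mul 1 v).mul_left (-171873114 : ℝ)
  have h2 := (hasSum_cos_mul 2 v).mul_left (171835152 : ℝ)
  have h3 := (hasSum_cos_mul 3 v).mul_left (257184477 : ℝ)
  have h4 := (hasSum_cos_mul 4 v).mul_left (103937264 : ℝ)
  have h5 := (hasSum_cos_mul 5 v).mul_left (75329225 : ℝ)
  have hA := (((h1.add h2).sub h3).add h4).sub h5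
  rw [one_mul] at hA
  have hA1 : HasSum (fun n : ℕ => pfc1 n * v ^ (2 * n))
      ((-171873114) * Real.cos v + 171835152 * Real.cos (2 * v)
        - 257184477 * Real.cos (3 * v) + 103937264 * Real.cos (4 * v)
        - 75329225 * Real.cos (5 * v)) := by
    convert hA using 2 with n
    · rfl
    simp only [pfc1]
    ring
  have g3 := hasSum_cos_mul 3 v
  have g4 := (hasSum_cos_mul 4 v).mul_left (2 : ℝ)
  have g5 := (hasSum_cos_mul 5 v).mul_left (2 : ℝ)
  have g6 := hasSum_cos_mul 6 v
  have hB := (((g3.sub g4).add g5).sub g6).mul_left (50803200 : ℝ)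
  have hB1 : HasSum (fun n : ℕ => pfc2 n * v ^ (2 * n))
      (50803200 * (Real.cos (3 * v) - 2 * Real.cos (4 * v)
        + 2 * Real.cos (5 * v) - Real.cos (6 * v))) := by
    convert hB using 2 with n
    · rfl
    simp only [pfc2]
    ring
  have hA2 := hA1.mul_right (v ^ 2)
  have hshift : HasSum (fun n : ℕ => pfe (n + 1) * v ^ (2 * (n + 1)))
      (((-171873114) * Real.cos v + 171835152 * Real.cos (2 * v)
        - 257184477 * Real.cos (3 * v) + 103937264 * Real.cos (4 * v)
        - 75329225 * Real.cos (5 * v)) * v ^ 2) := by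
    convert hA2 using 2 with n
    · rfl
    rw [pfe_succ]
    ring
  have hE : HasSum (fun n : ℕ => pfe n * v ^ (2 * n))
      (((-171873114) * Real.cos v + 171835152 * Real.cos (2 * v)
        - 257184477 * Real.cos (3 * v) + 103937264 * Real.cos (4 * v)
        - 75329225 * Real.cos (5 * v)) * v ^ 2) := by
    have := (hasSum_nat_add_iff (f := fun n : ℕ => pfe n * v ^ (2 * n)) 1).mp hshift
    simpa [pfe_zero] using this
  have := hE.add hB1
  have hfin : HasSum (fun n : ℕ => pfd n * v ^ (2 * n)) (pfnum v) := by
    unfold pfnum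
    convert this using 2 with n
    simp only [pfd]; ring
  exact hfin

lemma hasSum_P (v : ℝ) (hv : v ≠ 0) :
    HasSum (fun n : ℕ => pfd (n + 6) * v ^ (2 * n)) (pfnum v / v ^ 12) := by
  have hD := hasSum_pfnum v
  have hz : ∑ i ∈ Finset.range 6, pfd i * v ^ (2 * i) = 0 := by
    obtain ⟨e0, e1, e2, e3, e4, e5, -, -⟩ := pfd_vals
    simp [Finset.sum_range_succ, e0, e1, e2, e3, e4, e5]
  have h6 : HasSum (fun n : ℕ => pfd (n + 6) * v ^ (2 * (n + 6))) (pfnum v) := by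
    apply (hasSum_nat_add_iff (f := fun n : ℕ => pfd n * v ^ (2 * n)) 6).mpr
    rw [hz, add_zero]
    exact hD
  have h7 := h6.div_const (v ^ 12)
  convert h7 using 2 with n
  · rfl
  rw [show 2 * (n + 6) = 2 * n + 12 by ring, pow_add, mul_div_assoc,
    mul_div_cancel_right₀ _ (pow_ne_zero 12 hv)]

noncomputable def pfq (n : ℕ) : ℝ := (-1) ^ n / (4 ^ n * (Nat.factorial (2 * n + 1) : ℝ))

lemma pfq_vals : pfq 0 = 1 ∧ pfq 1 = -1/24 := by
  constructor <;> norm_num [pfq, Nat.factorial]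

lemma hasSum_Q (v : ℝ) (hv : v ≠ 0) :
    HasSum (fun n : ℕ => pfq n * v ^ (2 * n)) (Real.sin (v / 2) / (v / 2)) := by
  have h := (Real.hasSum_sin (v / 2)).div_const (v / 2)
  have hv2 : v / 2 ≠ 0 := by simpa using hv
  convert h using 2 with n
  · rfl
  have h2n : (2:ℝ)^(2*n) = 4^n := by rw [pow_mul]; norm_num
  have hpow : (v/2)^(2*n) = v^(2*n)/4^n := by rw [div_pow, h2n]
  rw [pfq, pow_succ, hpow]
  have h4 : (4:ℝ)^n ≠ 0 := by positivity
  have hf : ((Nat.factorial (2*n+1) : ℝ)) ≠ 0 := by positivity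
  field_simp

lemma abs_pfc1_le (n : ℕ) : |pfc1 n| ≤ 780159232 * (25 ^ n / (Nat.factorial (2 * n) : ℝ)) := by
  have hf : (0:ℝ) < (Nat.factorial (2 * n) : ℝ) := by positivity
  have e1 : (1:ℝ) ^ (2*n) ≤ 25 ^ n := by
    rw [pow_mul]; exact pow_le_pow_left₀ (by norm_num) (by norm_num) n
  have e2 : (2:ℝ) ^ (2*n) ≤ 25 ^ n := by
    rw [pow_mul]; exact pow_le_pow_left₀ (by norm_num) (by norm_num) n
  have e3 : (3:ℝ) ^ (2*n) ≤ 25 ^ n := by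
    rw [pow_mul]; exact pow_le_pow_left₀ (by norm_num) (by norm_num) n
  have e4 : (4:ℝ) ^ (2*n) ≤ 25 ^ n := by
    rw [pow_mul]; exact pow_le_pow_left₀ (by norm_num) (by norm_num) n
  have e5 : (5:ℝ) ^ (2*n) ≤ 25 ^ n := by
    rw [pow_mul]; exact pow_le_pow_left₀ (by norm_num) (by norm_num) n
  have p1 : (0:ℝ) ≤ (1:ℝ) ^ (2*n) := by positivity
  have p2 : (0:ℝ) ≤ (2:ℝ) ^ (2*n) := by positivity
  have p3 : (0:ℝ) ≤ (3:ℝ) ^ (2*n) := by positivity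
  have p4 : (0:ℝ) ≤ (4:ℝ) ^ (2*n) := by positivity
  have p5 : (0:ℝ) ≤ (5:ℝ) ^ (2*n) := by positivity
  have hS : |(-171873114 : ℝ) * 1 ^ (2 * n) + 171835152 * 2 ^ (2 * n) - 257184477 * 3 ^ (2 * n)
      + 103937264 * 4 ^ (2 * n) - 75329225 * 5 ^ (2 * n)| ≤ 780159232 * 25 ^ n := by
    rw [abs_le]; constructor <;> nlinarith
  calc |pfc1 n| = |(-171873114 : ℝ) * 1 ^ (2 * n) + 171835152 * 2 ^ (2 * n) - 257184477 * 3 ^ (2 * n)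
      + 103937264 * 4 ^ (2 * n) - 75329225 * 5 ^ (2 * n)| / (Nat.factorial (2 * n) : ℝ) := by
        rw [pfc1, abs_mul, abs_div, abs_pow, abs_neg, abs_one, one_pow,
          abs_of_pos hf]
        ring
    _ ≤ (780159232 * 25 ^ n) / (Nat.factorial (2 * n) : ℝ) := by
        gcongr
    _ = 780159232 * (25 ^ n / (Nat.factorial (2 * n) : ℝ)) := by ring

lemma abs_pfc2_le (n : ℕ) : |pfc2 n| ≤ 304819200 * (36 ^ n / (Nat.factorial (2 * n) : ℝ)) := by
  have hf : (0:ℝ) < (Nat.factorial (2 * n) : ℝ) := by positivity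
  have e3 : (3:ℝ) ^ (2*n) ≤ 36 ^ n := by
    rw [pow_mul]; exact pow_le_pow_left₀ (by norm_num) (by norm_num) n
  have e4 : (4:ℝ) ^ (2*n) ≤ 36 ^ n := by
    rw [pow_mul]; exact pow_le_pow_left₀ (by norm_num) (by norm_num) n
  have e5 : (5:ℝ) ^ (2*n) ≤ 36 ^ n := by
    rw [pow_mul]; exact pow_le_pow_left₀ (by norm_num) (by norm_num) n
  have e6 : (6:ℝ) ^ (2*n) ≤ 36 ^ n := by
    rw [pow_mul]; exact pow_le_pow_left₀ (by norm_num) (by norm_num) n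
  have p3 : (0:ℝ) ≤ (3:ℝ) ^ (2*n) := by positivity
  have p4 : (0:ℝ) ≤ (4:ℝ) ^ (2*n) := by positivity
  have p5 : (0:ℝ) ≤ (5:ℝ) ^ (2*n) := by positivity
  have p6 : (0:ℝ) ≤ (6:ℝ) ^ (2*n) := by positivity
  have hS : |(3:ℝ) ^ (2 * n) - 2 * 4 ^ (2 * n) + 2 * 5 ^ (2 * n) - 6 ^ (2 * n)| ≤ 6 * 36 ^ n := by
    rw [abs_le]; constructor <;> nlinarith
  calc |pfc2 n| = 50803200 * |(3:ℝ) ^ (2 * n) - 2 * 4 ^ (2 * n) + 2 * 5 ^ (2 * n) - 6 ^ (2 * n)|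
      / (Nat.factorial (2 * n) : ℝ) := by
        rw [pfc2, abs_mul, abs_mul, abs_div, abs_pow, abs_neg, abs_one, one_pow,
          abs_of_pos hf]
        norm_num
        ring
    _ ≤ 50803200 * (6 * 36 ^ n) / (Nat.factorial (2 * n) : ℝ) := by
        gcongr
    _ = 304819200 * (36 ^ n / (Nat.factorial (2 * n) : ℝ)) := by ring

lemma abs_pfe_le (n : ℕ) : |pfe n| ≤ 780159232 * (36 ^ n / (Nat.factorial n : ℝ)) := by
  match n with
  | 0 => simp [pfe_zero]
  | 1 =>
      rw [pfe_succ]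
      have := abs_pfc1_le 0
      norm_num [Nat.factorial] at this ⊢
      linarith
  | (m + 2) =>
      rw [pfe_succ]
      refine (abs_pfc1_le (m + 1)).trans ?_
      have h1 : (Nat.factorial (m + 2) : ℝ) ≤ (Nat.factorial (2 * (m + 1)) : ℝ) := by
        exact_mod_cast Nat.factorial_le (by omega)
      have h2 : (25:ℝ) ^ (m + 1) ≤ 36 ^ (m + 2) := by
        calc (25:ℝ) ^ (m + 1) ≤ 36 ^ (m + 1) := pow_le_pow_left₀ (by norm_num) (by norm_num) _
          _ ≤ 36 ^ (m + 2) := pow_le_pow_right₀ (by norm_num) (by omega)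
      have hf2 : (0:ℝ) < (Nat.factorial (m + 2) : ℝ) := by positivity
      gcongr

lemma abs_pfd_le (n : ℕ) : |pfd n| ≤ 1084978432 * (36 ^ n / (Nat.factorial n : ℝ)) := by
  have h1 := abs_pfe_le n
  have h2 : |pfc2 n| ≤ 304819200 * (36 ^ n / (Nat.factorial n : ℝ)) := by
    refine (abs_pfc2_le n).trans ?_
    have h1' : (Nat.factorial n : ℝ) ≤ (Nat.factorial (2 * n) : ℝ) := by
      exact_mod_cast Nat.factorial_le (by omega)
    have hf : (0:ℝ) < (Nat.factorial n : ℝ) := by positivity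
    gcongr
  calc |pfd n| ≤ |pfe n| + |pfc2 n| := abs_add_le _ _
    _ ≤ 1084978432 * (36 ^ n / (Nat.factorial n : ℝ)) := by linarith

lemma summable_abs_pfd : Summable (fun n => |pfd n|) := by
  apply Summable.of_nonneg_of_le (fun n => abs_nonneg _) abs_pfd_le
  exact (Real.summable_pow_div_factorial 36).mul_left 1084978432

lemma abs_pfq_le (n : ℕ) : |pfq n| ≤ 1 * (36 ^ n / (Nat.factorial n : ℝ)) := by
  have hf : (0:ℝ) < (Nat.factorial n : ℝ) := by positivity
  have h1 : (Nat.factorial n : ℝ) ≤ 4 ^ n * (Nat.factorial (2 * n + 1) : ℝ) := by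
    calc (Nat.factorial n : ℝ) ≤ (Nat.factorial (2 * n + 1) : ℝ) := by
          exact_mod_cast Nat.factorial_le (by omega)
      _ ≤ 4 ^ n * (Nat.factorial (2 * n + 1) : ℝ) := by
          nlinarith [one_le_pow₀ (n := n) (by norm_num : (1:ℝ) ≤ 4),
            (by positivity : (0:ℝ) < (Nat.factorial (2*n+1) : ℝ))]
  have h36 : (1:ℝ) ≤ 36 ^ n := one_le_pow₀ (n := n) (by norm_num : (1:ℝ) ≤ 36)
  have habs : |pfq n| = 1 / (4 ^ n * (Nat.factorial (2 * n + 1) : ℝ)) := by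
    rw [pfq, abs_div, abs_pow, abs_neg, abs_one, one_pow, abs_of_pos (by positivity)]
  rw [habs, one_mul]
  rw [div_le_div_iff₀ (by positivity) hf]
  calc (1:ℝ) * (Nat.factorial n : ℝ) = (Nat.factorial n : ℝ) := by ring
    _ ≤ 4 ^ n * (Nat.factorial (2 * n + 1) : ℝ) := h1
    _ ≤ 36 ^ n * (4 ^ n * (Nat.factorial (2 * n + 1) : ℝ)) := by
        nlinarith [(by positivity : (0:ℝ) < 4 ^ n * (Nat.factorial (2*n+1) : ℝ))]
    _ = 36 ^ n * (4 ^ n * (Nat.factorial (2 * n + 1) : ℝ)) := rfl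

lemma summable_abs_pfq : Summable (fun n => |pfq n|) := by
  apply Summable.of_nonneg_of_le (fun n => abs_nonneg _) abs_pfq_le
  exact (Real.summable_pow_div_factorial 36).mul_left 1

lemma alg1 (Nv v s : ℝ) (hv : v ≠ 0) (hs : s ≠ 0) :
    Nv / (103219200 * v ^ 2 * s ^ 10) = (Nv / v ^ 12) / (100800 * (s / (v / 2)) ^ 10) := by
  rw [div_pow]
  field_simp
  ring

lemma alg2 (p q v d6 : ℝ) (hv : v ≠ 0) (hq : q ≠ 0) :
    (p / (100800 * q ^ 10) - d6 / 100800) / v ^ 2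
      = ((p - d6) / v ^ 2 - d6 * (((q - 1) / v ^ 2)
          * (1 + q + q^2 + q^3 + q^4 + q^5 + q^6 + q^7 + q^8 + q^9))) / (100800 * q ^ 10) := by
  field_simp
  ring

/-- The PF-D0 coefficient `pfb6` tends to the corresponding classical
Quinlan–Tremaine coefficient as `v → 0⁺`, with the stated `v²`-Taylor coefficient. -/
theorem pfd0_b6_limit :
    Tendsto pfb6 (nhdsWithin 0 (Set.Ioi 0)) (nhds (-253491379 / 4435200)) ∧
    Tendsto (fun v : ℝ => (pfb6 v - (-253491379 / 4435200)) / v ^ 2)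
      (nhdsWithin 0 (Set.Ioi 0)) (nhds (16301796103 / 1153152000)) := by
  obtain ⟨-, -, -, -, -, -, hd6, hd7⟩ := pfd_vals
  obtain ⟨hq0, hq1⟩ := pfq_vals
  set P : ℝ → ℝ := fun v => pfnum v / v ^ 12 with hPdef
  set Q : ℝ → ℝ := fun v => Real.sin (v / 2) / (v / 2) with hQdef
  have hfP : ∀ v : ℝ, v ∈ Set.Ioo (0:ℝ) 1 →
      HasSum (fun n => pfd (n + 6) * v ^ (2 * n)) (P v) :=
    fun v hv => hasSum_P v (ne_of_gt hv.1)
  have hfQ : ∀ v : ℝ, v ∈ Set.Ioo (0:ℝ) 1 →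
      HasSum (fun n => pfq n * v ^ (2 * n)) (Q v) :=
    fun v hv => hasSum_Q v (ne_of_gt hv.1)
  have hsP : Summable (fun n => |pfd (n + 6)|) :=
    (summable_nat_add_iff (f := fun n => |pfd n|) 6).mpr summable_abs_pfd
  have hP1 : Tendsto P (nhdsWithin 0 (Set.Ioi 0)) (nhds (pfd 6)) := by
    have h := cont_lim (fun n => pfd (n + 6)) P hsP hfP
    simpa using h
  have hP2 : Tendsto (fun v => (P v - pfd 6) / v ^ 2) (nhdsWithin 0 (Set.Ioi 0))
      (nhds (pfd 7)) := by
    have h := ratio_lim (fun n => pfd (n + 6)) P hsP hfP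
    simp only [show (0:ℕ) + 6 = 6 from rfl, show (1:ℕ) + 6 = 7 from rfl] at h
    simpa using h
  have hQ1 : Tendsto Q (nhdsWithin 0 (Set.Ioi 0)) (nhds 1) := by
    have h := cont_lim pfq Q summable_abs_pfq hfQ
    rwa [hq0] at h
  have hQ2 : Tendsto (fun v => (Q v - 1) / v ^ 2) (nhdsWithin 0 (Set.Ioi 0))
      (nhds (-1/24)) := by
    have h := ratio_lim pfq Q summable_abs_pfq hfQ
    rwa [hq0, hq1] at h
  have hIoo : Set.Ioo (0:ℝ) 1 ∈ nhdsWithin (0:ℝ) (Set.Ioi 0) :=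
    Ioo_mem_nhdsGT_of_mem (by constructor <;> norm_num)
  have hQne : ∀ v ∈ Set.Ioo (0:ℝ) 1, Q v ≠ 0 := by
    intro v hv
    have hv0 : (0:ℝ) < v := hv.1
    have hsin : 0 < Real.sin (v / 2) :=
      Real.sin_pos_of_pos_of_lt_pi (by linarith) (by nlinarith [Real.pi_gt_three, hv.2])
    exact ne_of_gt (div_pos hsin (by linarith))
  have hEq : ∀ v ∈ Set.Ioo (0:ℝ) 1, pfb6 v = P v / (100800 * Q v ^ 10) := by
    intro v hv
    have hv0 : (0:ℝ) < v := hv.1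
    have hvne : v ≠ 0 := ne_of_gt hv0
    have hsin : Real.sin (v / 2) ≠ 0 :=
      ne_of_gt (Real.sin_pos_of_pos_of_lt_pi (by linarith)
        (by nlinarith [Real.pi_gt_three, hv.2]))
    show pfnum v / (103219200 * v ^ 2 * (Real.sin (v / 2)) ^ 10) = _
    rw [alg1 (pfnum v) v (Real.sin (v / 2)) hvne hsin]
  have hden : Tendsto (fun v => 100800 * Q v ^ 10) (nhdsWithin 0 (Set.Ioi 0))
      (nhds (100800 * 1 ^ 10)) := tendsto_const_nhds.mul (hQ1.pow 10)
  have lim1' : Tendsto (fun v => P v / (100800 * Q v ^ 10)) (nhdsWithin 0 (Set.Ioi 0))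
      (nhds (pfd 6 / (100800 * 1 ^ 10))) := hP1.div hden (by norm_num)
  have lim1 : Tendsto pfb6 (nhdsWithin 0 (Set.Ioi 0)) (nhds (-253491379 / 4435200)) := by
    have hval : pfd 6 / (100800 * 1 ^ 10) = (-253491379 / 4435200 : ℝ) := by
      rw [hd6]; norm_num
    rw [← hval]
    apply lim1'.congr'
    filter_upwards [hIoo] with v hv using (hEq v hv).symm
  refine ⟨lim1, ?_⟩
  have hSsum : Tendsto (fun v => 1 + Q v + Q v ^ 2 + Q v ^ 3 + Q v ^ 4 + Q v ^ 5
      + Q v ^ 6 + Q v ^ 7 + Q v ^ 8 + Q v ^ 9) (nhdsWithin 0 (Set.Ioi 0))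
      (nhds (1 + 1 + 1 ^ 2 + 1 ^ 3 + 1 ^ 4 + 1 ^ 5 + 1 ^ 6 + 1 ^ 7 + 1 ^ 8 + 1 ^ 9)) :=
    ((((((((tendsto_const_nhds.add hQ1).add (hQ1.pow 2)).add (hQ1.pow 3)).add
      (hQ1.pow 4)).add (hQ1.pow 5)).add (hQ1.pow 6)).add (hQ1.pow 7)).add
      (hQ1.pow 8)).add (hQ1.pow 9)
  have hnum2 : Tendsto (fun v => (P v - pfd 6) / v ^ 2 - pfd 6 * (((Q v - 1) / v ^ 2)
      * (1 + Q v + Q v ^ 2 + Q v ^ 3 + Q v ^ 4 + Q v ^ 5 + Q v ^ 6 + Q v ^ 7 + Q v ^ 8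
        + Q v ^ 9))) (nhdsWithin 0 (Set.Ioi 0))
      (nhds (pfd 7 - pfd 6 * ((-1/24) * (1 + 1 + 1 ^ 2 + 1 ^ 3 + 1 ^ 4 + 1 ^ 5 + 1 ^ 6
        + 1 ^ 7 + 1 ^ 8 + 1 ^ 9)))) :=
    hP2.sub (tendsto_const_nhds.mul (hQ2.mul hSsum))
  have lim2' := hnum2.div hden (by norm_num)
  have hval2 : (pfd 7 - pfd 6 * ((-1/24) * (1 + 1 + 1 ^ 2 + 1 ^ 3 + 1 ^ 4 + 1 ^ 5 + 1 ^ 6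
      + 1 ^ 7 + 1 ^ 8 + 1 ^ 9))) / (100800 * 1 ^ 10) = (16301796103 / 1153152000 : ℝ) := by
    rw [hd6, hd7]; norm_num
  rw [← hval2]
  apply lim2'.congr'
  filter_upwards [hIoo] with v hv
  have hvne : v ≠ 0 := ne_of_gt hv.1
  rw [hEq v hv, show (-253491379 / 4435200 : ℝ) = pfd 6 / 100800 by rw [hd6]; norm_num]
  exact (alg2 (P v) (Q v) v (pfd 6) hvne (hQne v hv)).symm
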